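/- Let Q(X,Y) = aX² + bXY + cY² be a standard definite binary quadratic form over F_q[u] (q odd). Then the short vectors of Q (primitive vectors minimizing deg Q(v)) are exactly F_q^× × {0} if deg a < deg c, and F_q × F_q \ {(0,0)} if deg a = deg c. In particular Q has exactly q-1 short vectors in the first case and q²-1 in the second. -/

import Mathlib

/-- `D ∈ F_q[u]` is definite. -/
def IsDefinitePoly {F : Type*} [Field F] (D : Polynomial F) : Prop :=
  (¬ ∃ e : Polynomial F, -D = e ^ 2) ∧
    ¬ (Even D.natDegree ∧ ∃ t : F, t ^ 2 = (-D).leadingCoeff)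

/-- The value of the quadratic form `aX² + bXY + cY²` at a vector. -/
noncomputable def QFormVal {F : Type*} [Field F] (a b c : Polynomial F)
    (v : Polynomial F × Polynomial F) : Polynomial F :=
  a * v.1 ^ 2 + b * v.1 * v.2 + c * v.2 ^ 2

/-- A short vector of the quadratic form `aX² + bXY + cY²`: a primitive vector minimizing
the degree of the value of the form over all primitive vectors. -/
def IsShortVector {F : Type*} [Field F] (a b c : Polynomial F)
    (v : Polynomial F × Polynomial F) : Prop :=
  IsCoprime v.1 v.2 ∧ ∀ w : Polynomial F × Polynomial F, IsCoprime w.1 w.2 →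
    (QFormVal a b c v).degree ≤ (QFormVal a b c w).degree

open Polynomial

section Aux

variable {F : Type*} [Field F] {a b c : Polynomial F}

lemma SV.ha (hba : b.degree < a.degree) : a ≠ 0 := by
  intro h; simp [h] at hba

lemma SV.hc (hca : a.degree ≤ c.degree) (hba : b.degree < a.degree) : c ≠ 0 := by
  intro h
  rw [h, degree_zero, le_bot_iff, degree_eq_bot] at hca
  exact SV.ha hba hca

/-- degree and leading coefficient of the discriminant-like polynomial -/
lemma SV.degD (hca : a.degree ≤ c.degree) (hba : b.degree < a.degree) :
    (a * c - Polynomial.C ((4 : F)⁻¹) * b ^ 2).natDegree = a.natDegree + c.natDegree ∧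
    (a * c - Polynomial.C ((4 : F)⁻¹) * b ^ 2).leadingCoeff = a.leadingCoeff * c.leadingCoeff := by
  have ha := SV.ha hba
  have hc := SV.hc hca hba
  have hacbot : ⊥ < (a * c).degree :=
    bot_lt_iff_ne_bot.mpr (by simp [degree_eq_bot, ha, hc])
  have hlt : (Polynomial.C ((4 : F)⁻¹) * b ^ 2).degree < (a * c).degree := by
    rcases eq_or_ne b 0 with rfl | hb
    · simpa using hacbot
    rcases eq_or_ne ((4 : F)⁻¹) 0 with h4 | h4
    · simpa [h4] using hacbot
    rw [degree_C_mul h4]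
    apply degree_lt_degree
    rw [natDegree_pow, natDegree_mul ha hc]
    have h1 : b.natDegree < a.natDegree := natDegree_lt_natDegree hb hba
    have h2 : a.natDegree ≤ c.natDegree := natDegree_le_natDegree hca
    omega
  constructor
  · rw [sub_eq_add_neg, natDegree_add_eq_left_of_degree_lt (by simpa using hlt), natDegree_mul ha hc]
  · rw [sub_eq_add_neg, add_comm, leadingCoeff_add_of_degree_lt (by simpa using hlt),
      leadingCoeff_mul]

/-- the key degree formula -/
lemma SV.deg_val (hca : a.degree ≤ c.degree) (hba : b.degree < a.degree)
    (hdef : IsDefinitePoly (a * c - Polynomial.C ((4 : F)⁻¹) * b ^ 2))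
    (x y : Polynomial F) :
    (QFormVal a b c (x, y)).degree = max (a * x ^ 2).degree (c * y ^ 2).degree := by
  have ha := SV.ha hba
  have hc := SV.hc hca hba
  rcases eq_or_ne x 0 with rfl | hx
  · simp [QFormVal, max_eq_right bot_le]
  rcases eq_or_ne y 0 with rfl | hy
  · simp [QFormVal, max_eq_left bot_le]
  have hax : a * x ^ 2 ≠ 0 := mul_ne_zero ha (pow_ne_zero _ hx)
  have hcy : c * y ^ 2 ≠ 0 := mul_ne_zero hc (pow_ne_zero _ hy)
  have hdax : (a * x ^ 2).natDegree = a.natDegree + 2 * x.natDegree := by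
    rw [natDegree_mul ha (pow_ne_zero _ hx), natDegree_pow]
  have hdcy : (c * y ^ 2).natDegree = c.natDegree + 2 * y.natDegree := by
    rw [natDegree_mul hc (pow_ne_zero _ hy), natDegree_pow]
  have h2 : a.natDegree ≤ c.natDegree := natDegree_le_natDegree hca
  -- cross term is strictly smaller
  have hcross : (b * x * y).degree < max (a * x ^ 2).degree (c * y ^ 2).degree := by
    rcases eq_or_ne b 0 with rfl | hb
    · simp only [zero_mul, degree_zero]
      exact lt_max_of_lt_left (bot_lt_iff_ne_bot.mpr fun hb' => hax (degree_eq_bot.mp hb'))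
    have h1 : b.natDegree < a.natDegree := natDegree_lt_natDegree hb hba
    have hbxy : b * x * y ≠ 0 := mul_ne_zero (mul_ne_zero hb hx) hy
    rcases le_total x.natDegree y.natDegree with h | h
    · refine lt_max_of_lt_right (degree_lt_degree ?_)
      rw [natDegree_mul (mul_ne_zero hb hx) hy, natDegree_mul hb hx, hdcy]; omega
    · refine lt_max_of_lt_left (degree_lt_degree ?_)
      rw [natDegree_mul (mul_ne_zero hb hx) hy, natDegree_mul hb hx, hdax]; omega
  have hmain : (a * x ^ 2 + c * y ^ 2).degree = max (a * x ^ 2).degree (c * y ^ 2).degree := by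
    rcases lt_trichotomy (a * x ^ 2).degree (c * y ^ 2).degree with h | h | h
    · rw [degree_add_eq_right_of_degree_lt h, max_eq_right h.le]
    · -- equal degrees: leading coefficients cannot cancel by definiteness
      apply degree_add_eq_of_leadingCoeff_add_ne_zero
      intro hzero
      apply hdef.2
      have hdeq : a.natDegree + 2 * x.natDegree = c.natDegree + 2 * y.natDegree :=
        hdax ▸ hdcy ▸ natDegree_eq_of_degree_eq h
      obtain ⟨hD1, hD2⟩ := SV.degD hca hba
      constructor
      · rw [hD1, Nat.even_iff]; omega
      · have hlx : x.leadingCoeff ≠ 0 := leadingCoeff_ne_zero.mpr hx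
        refine ⟨c.leadingCoeff * y.leadingCoeff / x.leadingCoeff, ?_⟩
        rw [leadingCoeff_neg, hD2]
        have e1 : (a * x ^ 2).leadingCoeff = a.leadingCoeff * x.leadingCoeff ^ 2 := by
          rw [leadingCoeff_mul, leadingCoeff_pow]
        have e2 : (c * y ^ 2).leadingCoeff = c.leadingCoeff * y.leadingCoeff ^ 2 := by
          rw [leadingCoeff_mul, leadingCoeff_pow]
        rw [e1, e2] at hzero
        field_simp
        linear_combination (c.leadingCoeff : F) * hzero
    · rw [degree_add_eq_left_of_degree_lt h, max_eq_left h.le]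
  have : QFormVal a b c (x, y) = (a * x ^ 2 + c * y ^ 2) + b * x * y := by
    simp [QFormVal]; ring
  rw [this, degree_add_eq_left_of_degree_lt (hmain ▸ hcross), hmain]

end Aux

section Aux2

variable {F : Type*} [Field F] {a b c : Polynomial F}

lemma SV.lb (hca : a.degree ≤ c.degree) (hba : b.degree < a.degree)
    (hdef : IsDefinitePoly (a * c - Polynomial.C ((4 : F)⁻¹) * b ^ 2))
    {w : Polynomial F × Polynomial F} (hw : IsCoprime w.1 w.2) :
    a.degree ≤ (QFormVal a b c w).degree := by
  obtain ⟨x, y⟩ := w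
  rw [SV.deg_val hca hba hdef]
  rcases eq_or_ne y 0 with rfl | hy
  · have hu : IsUnit x := isCoprime_zero_right.mp hw
    obtain ⟨t, ht, rfl⟩ := Polynomial.isUnit_iff.mp hu
    refine le_max_of_le_left ?_
    rw [← C_pow, degree_mul, degree_C (pow_ne_zero 2 ht.ne_zero), add_zero]
  · refine le_max_of_le_right ?_
    calc a.degree ≤ c.degree := hca
      _ ≤ c.degree + (y ^ 2).degree :=
        le_add_of_nonneg_right (zero_le_degree_iff.mpr (pow_ne_zero 2 hy))
      _ = (c * y ^ 2).degree := (degree_mul).symm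

lemma SV.short_iff (hca : a.degree ≤ c.degree) (hba : b.degree < a.degree)
    (hdef : IsDefinitePoly (a * c - Polynomial.C ((4 : F)⁻¹) * b ^ 2))
    (v : Polynomial F × Polynomial F) :
    IsShortVector a b c v ↔ IsCoprime v.1 v.2 ∧ (QFormVal a b c v).degree ≤ a.degree := by
  constructor
  · rintro ⟨h1, h2⟩
    refine ⟨h1, ?_⟩
    have := h2 (1, 0) (by exact isCoprime_one_left)
    simpa [QFormVal] using this
  · rintro ⟨h1, h2⟩
    exact ⟨h1, fun w hw => h2.trans (SV.lb hca hba hdef hw)⟩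

lemma SV.coprime_C {s t : F} (h : ¬(s = 0 ∧ t = 0)) :
    IsCoprime (Polynomial.C s) (Polynomial.C t) := by
  rcases eq_or_ne s 0 with rfl | hs
  · rcases eq_or_ne t 0 with rfl | ht
    · exact absurd ⟨rfl, rfl⟩ h
    · exact ⟨0, Polynomial.C t⁻¹, by rw [zero_mul, zero_add, ← C_mul, inv_mul_cancel₀ ht, C_1]⟩
  · exact ⟨Polynomial.C s⁻¹, 0, by rw [zero_mul, add_zero, ← C_mul, inv_mul_cancel₀ hs, C_1]⟩

lemma SV.deg_aC (s : F) : (a * Polynomial.C s ^ 2).degree ≤ a.degree := by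
  calc (a * Polynomial.C s ^ 2).degree = a.degree + (Polynomial.C s ^ 2).degree := degree_mul
    _ ≤ a.degree + 0 := add_le_add le_rfl (by rw [← C_pow]; exact degree_C_le : (Polynomial.C s ^ 2).degree ≤ 0)
    _ = a.degree := add_zero _

end Aux2


/-- The short vectors of a standard definite binary quadratic form `aX² + bXY + cY²`
over `F_q[u]` (`q` odd) are exactly `F_q^× × {0}` if `deg a < deg c`, and
`F_q × F_q \ {(0,0)}` if `deg a = deg c`; in particular there are exactly `q - 1` short
vectors in the first case and `q² - 1` in the second. -/
theorem short_vectors_of_standard_definite_form (F : Type*) [Field F] [Fintype F]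
    (hq : Odd (Fintype.card F)) (a b c : Polynomial F)
    (hca : a.degree ≤ c.degree) (hba : b.degree < a.degree)
    (hdef : IsDefinitePoly (a * c - Polynomial.C ((4 : F)⁻¹) * b ^ 2)) :
    (a.degree < c.degree →
        {v : Polynomial F × Polynomial F | IsShortVector a b c v} =
            {v : Polynomial F × Polynomial F | ∃ t : F, t ≠ 0 ∧ v = (Polynomial.C t, 0)} ∧
          Set.ncard {v : Polynomial F × Polynomial F | IsShortVector a b c v} =
            Fintype.card F - 1) ∧
    (a.degree = c.degree →
        {v : Polynomial F × Polynomial F | IsShortVector a b c v} =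
            {v : Polynomial F × Polynomial F |
              ∃ s t : F, ¬ (s = 0 ∧ t = 0) ∧ v = (Polynomial.C s, Polynomial.C t)} ∧
          Set.ncard {v : Polynomial F × Polynomial F | IsShortVector a b c v} =
            Fintype.card F ^ 2 - 1) := by
  have ha : a ≠ 0 := SV.ha hba
  constructor
  · -- case deg a < deg c
    intro hlt
    have hset : {v : Polynomial F × Polynomial F | IsShortVector a b c v} =
        {v : Polynomial F × Polynomial F | ∃ t : F, t ≠ 0 ∧ v = (Polynomial.C t, 0)} := by
      ext ⟨x, y⟩
      simp only [Set.mem_setOf_eq, SV.short_iff hca hba hdef, SV.deg_val hca hba hdef,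
        max_le_iff]
      constructor
      · rintro ⟨h1, h2, h3⟩
        have hy : y = 0 := by
          by_contra hy
          have : c.degree ≤ (c * y ^ 2).degree := by
            calc c.degree ≤ c.degree + (y ^ 2).degree :=
                le_add_of_nonneg_right (zero_le_degree_iff.mpr (pow_ne_zero 2 hy))
              _ = (c * y ^ 2).degree := (degree_mul).symm
          exact absurd (this.trans h3) (not_le.mpr hlt)
        subst hy
        obtain ⟨t, ht, rfl⟩ := Polynomial.isUnit_iff.mp (isCoprime_zero_right.mp h1)
        exact ⟨t, ht.ne_zero, rfl⟩
      · rintro ⟨t, ht, heq⟩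
        rw [Prod.mk.injEq] at heq
        obtain ⟨rfl, rfl⟩ := heq
        refine ⟨isCoprime_zero_right.mpr (isUnit_C.mpr ht.isUnit), SV.deg_aC t, ?_⟩
        simp
    refine ⟨hset, ?_⟩
    rw [hset]
    have himg : {v : Polynomial F × Polynomial F | ∃ t : F, t ≠ 0 ∧ v = (Polynomial.C t, 0)} =
        (fun t : F => ((Polynomial.C t : Polynomial F), (0 : Polynomial F))) '' {t : F | t ≠ 0} := by
      ext v; simp [eq_comm]
    rw [himg, Set.ncard_image_of_injective _ (fun s t hst => C_injective (Prod.mk.injEq .. ▸ hst).1)]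
    have : {t : F | t ≠ 0} = Set.univ \ {0} := by ext t; simp
    rw [this, Set.ncard_diff (by simp), Set.ncard_univ, Set.ncard_singleton, Nat.card_eq_fintype_card]
  · -- case deg a = deg c
    intro heq
    have hset : {v : Polynomial F × Polynomial F | IsShortVector a b c v} =
        {v : Polynomial F × Polynomial F |
          ∃ s t : F, ¬ (s = 0 ∧ t = 0) ∧ v = (Polynomial.C s, Polynomial.C t)} := by
      ext ⟨x, y⟩
      simp only [Set.mem_setOf_eq, SV.short_iff hca hba hdef, SV.deg_val hca hba hdef,
        max_le_iff]
      constructor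
      · rintro ⟨h1, h2, h3⟩
        have key : ∀ p z : Polynomial F, p ≠ 0 → (p * z ^ 2).degree ≤ p.degree →
            z.degree ≤ 0 := by
          intro p z hp hle
          rcases eq_or_ne z 0 with rfl | hz
          · simp
          have hpne : p.degree ≠ ⊥ := fun hb' => hp (degree_eq_bot.mp hb')
          have h2'' : p.degree + (z ^ 2).degree ≤ p.degree + 0 := by
            rw [add_zero, ← degree_mul]; exact hle
          have h2' : (z ^ 2).degree ≤ 0 := (WithBot.add_le_add_iff_left hpne).mp h2''
          rw [degree_eq_natDegree (pow_ne_zero 2 hz), natDegree_pow] at h2'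
          have hn : 2 * z.natDegree ≤ 0 := by exact_mod_cast h2'
          rw [degree_eq_natDegree hz]
          exact_mod_cast Nat.le_of_eq (by omega)
        have hc : c ≠ 0 := SV.hc hca hba
        have hx : x.degree ≤ 0 := key a x ha h2
        have hy : y.degree ≤ 0 := key c y hc (heq ▸ h3)
        have hxe := eq_C_of_degree_le_zero hx
        have hye := eq_C_of_degree_le_zero hy
        refine ⟨x.coeff 0, y.coeff 0, ?_, by rw [Prod.mk.injEq]; exact ⟨hxe, hye⟩⟩
        rintro ⟨hs0, ht0⟩
        rw [hs0, map_zero] at hxe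
        rw [ht0, map_zero] at hye
        rw [hxe, hye] at h1
        exact (not_isUnit_zero : ¬IsUnit (0 : Polynomial F)) (isCoprime_zero_right.mp h1)
      · rintro ⟨s, t, hst, heq'⟩
        rw [Prod.mk.injEq] at heq'
        obtain ⟨rfl, rfl⟩ := heq'
        refine ⟨SV.coprime_C hst, SV.deg_aC s, ?_⟩
        exact le_of_le_of_eq (SV.deg_aC t) heq.symm
    refine ⟨hset, ?_⟩
    rw [hset]
    have himg : {v : Polynomial F × Polynomial F |
          ∃ s t : F, ¬ (s = 0 ∧ t = 0) ∧ v = (Polynomial.C s, Polynomial.C t)} =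
        (fun p : F × F => ((Polynomial.C p.1 : Polynomial F), (Polynomial.C p.2 : Polynomial F))) ''
          {p : F × F | p ≠ 0} := by
      ext v
      constructor
      · rintro ⟨s, t, hst, rfl⟩
        exact ⟨(s, t), by simpa [Prod.ext_iff] using hst, rfl⟩
      · rintro ⟨⟨s, t⟩, hst, rfl⟩
        exact ⟨s, t, by simpa [Prod.ext_iff] using hst, rfl⟩
    rw [himg, Set.ncard_image_of_injective _ ?_]
    · have : {p : F × F | p ≠ 0} = Set.univ \ {0} := by ext p; simp
      rw [this, Set.ncard_diff (by simp), Set.ncard_univ, Set.ncard_singleton,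
        Nat.card_eq_fintype_card, Fintype.card_prod, sq]
    · rintro ⟨s, t⟩ ⟨s', t'⟩ hst
      simp only [Prod.mk.injEq] at hst ⊢
      exact ⟨C_injective hst.1, C_injective hst.2⟩
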